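/- Let Φ : ℝ^N → Set(ℝ^N) be a monotone set-valued map with Φ⁻¹(0) nonempty, let Q, M be real N×N matrices with M invertible such that H := Q M⁻¹ is symmetric positive definite and D := Qᵀ + Q − Mᵀ H M is symmetric positive definite. Let sequences (ξ^k), (ξ̂^k), (V^k) in ℝ^N satisfy, for every k ≥ 0, Q(ξ^k − ξ̂^k) + V^k ∈ Φ(ξ̂^k) and ξ^{k+1} = ξ^k − M(ξ^k − ξ̂^k), and suppose there are constants C ≥ 0 and τ ∈ (0,1) with ‖V^k‖ ≤ C τ^k for all k. Then k · dist(0, Φ(ξ̂^k))² → 0 as k → ∞, where dist(0, Φ(ξ̂^k)) = inf{‖p‖ : p ∈ Φ(ξ̂^k)}. -/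

import Mathlib

open Matrix

/-- Euclidean norm of a vector in `Fin N → ℝ`, written via the dot product. -/
noncomputable def euclidNorm {N : ℕ} (x : Fin N → ℝ) : ℝ := Real.sqrt (x ⬝ᵥ x)

namespace Stmt12Aux

open Filter

variable {N : ℕ}

lemma dp_self_nonneg (x : Fin N → ℝ) : 0 ≤ x ⬝ᵥ x :=
  Finset.sum_nonneg fun _ _ => mul_self_nonneg _

lemma cs_sq (x y : Fin N → ℝ) : (x ⬝ᵥ y) ^ 2 ≤ (x ⬝ᵥ x) * (y ⬝ᵥ y) := by
  have h := Finset.sum_mul_sq_le_sq_mul_sq Finset.univ x y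
  simpa [dotProduct, pow_two] using h

lemma cs (x y : Fin N → ℝ) :
    x ⬝ᵥ y ≤ Real.sqrt (x ⬝ᵥ x) * Real.sqrt (y ⬝ᵥ y) := by
  calc x ⬝ᵥ y ≤ |x ⬝ᵥ y| := le_abs_self _
    _ = Real.sqrt ((x ⬝ᵥ y) ^ 2) := (Real.sqrt_sq_eq_abs _).symm
    _ ≤ Real.sqrt ((x ⬝ᵥ x) * (y ⬝ᵥ y)) := Real.sqrt_le_sqrt (cs_sq x y)
    _ = Real.sqrt (x ⬝ᵥ x) * Real.sqrt (y ⬝ᵥ y) := Real.sqrt_mul (dp_self_nonneg x) _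

lemma en_sq (x : Fin N → ℝ) : Real.sqrt (x ⬝ᵥ x) ^ 2 = x ⬝ᵥ x :=
  Real.sq_sqrt (dp_self_nonneg x)

lemma en_add_le (x y : Fin N → ℝ) :
    Real.sqrt ((x + y) ⬝ᵥ (x + y)) ≤ Real.sqrt (x ⬝ᵥ x) + Real.sqrt (y ⬝ᵥ y) := by
  have h1 : (x + y) ⬝ᵥ (x + y) ≤ (Real.sqrt (x ⬝ᵥ x) + Real.sqrt (y ⬝ᵥ y)) ^ 2 := by
    have h2 := cs x y
    have h3 := en_sq x
    have h4 := en_sq y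
    have : (x + y) ⬝ᵥ (x + y) = x ⬝ᵥ x + 2 * (x ⬝ᵥ y) + y ⬝ᵥ y := by
      simp [dotProduct_add, add_dotProduct, dotProduct_comm y x]; ring
    nlinarith
  calc Real.sqrt ((x + y) ⬝ᵥ (x + y)) ≤
      Real.sqrt ((Real.sqrt (x ⬝ᵥ x) + Real.sqrt (y ⬝ᵥ y)) ^ 2) := Real.sqrt_le_sqrt h1
    _ = _ := Real.sqrt_sq (by positivity)

lemma en_sub_le (x y : Fin N → ℝ) :
    Real.sqrt ((x - y) ⬝ᵥ (x - y)) ≤ Real.sqrt (x ⬝ᵥ x) + Real.sqrt (y ⬝ᵥ y) := by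
  have := en_add_le x (-y)
  simpa [sub_eq_add_neg, neg_dotProduct, dotProduct_neg] using this

lemma two_dp_le (x y : Fin N → ℝ) : 2 * (x ⬝ᵥ y) ≤ x ⬝ᵥ x + y ⬝ᵥ y := by
  have h := dp_self_nonneg (x - y)
  have : (x - y) ⬝ᵥ (x - y) = x ⬝ᵥ x - 2 * (x ⬝ᵥ y) + y ⬝ᵥ y := by
    simp [dotProduct_sub, sub_dotProduct, dotProduct_comm y x]; ring
  linarith

lemma add_sq_le (x y : Fin N → ℝ) :
    (x + y) ⬝ᵥ (x + y) ≤ 2 * (x ⬝ᵥ x) + 2 * (y ⬝ᵥ y) := by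
  have h1 : (x + y) ⬝ᵥ (x + y) = x ⬝ᵥ x + 2 * (x ⬝ᵥ y) + y ⬝ᵥ y := by
    simp [dotProduct_add, add_dotProduct, dotProduct_comm y x]; ring
  have h2 := two_dp_le x y
  linarith

lemma mulVec_dp_le (A : Matrix (Fin N) (Fin N) ℝ) (x : Fin N → ℝ) :
    (A *ᵥ x) ⬝ᵥ (A *ᵥ x) ≤ (∑ i, ∑ j, (A i j) ^ 2) * (x ⬝ᵥ x) := by
  have h : ∀ i : Fin N, ((A *ᵥ x) i) * ((A *ᵥ x) i) ≤ (∑ j, (A i j) ^ 2) * (x ⬝ᵥ x) := by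
    intro i
    have := Finset.sum_mul_sq_le_sq_mul_sq Finset.univ (fun j => A i j) x
    simpa [Matrix.mulVec, dotProduct, pow_two] using this
  calc (A *ᵥ x) ⬝ᵥ (A *ᵥ x) = ∑ i, ((A *ᵥ x) i) * ((A *ᵥ x) i) := rfl
    _ ≤ ∑ i : Fin N, (∑ j, (A i j) ^ 2) * (x ⬝ᵥ x) := Finset.sum_le_sum fun i _ => h i
    _ = (∑ i, ∑ j, (A i j) ^ 2) * (x ⬝ᵥ x) := (Finset.sum_mul _ _ _).symm

lemma en_mulVec_le (A : Matrix (Fin N) (Fin N) ℝ) (x : Fin N → ℝ) :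
    Real.sqrt ((A *ᵥ x) ⬝ᵥ (A *ᵥ x)) ≤
      Real.sqrt (∑ i, ∑ j, (A i j) ^ 2) * Real.sqrt (x ⬝ᵥ x) := by
  calc Real.sqrt ((A *ᵥ x) ⬝ᵥ (A *ᵥ x))
      ≤ Real.sqrt ((∑ i, ∑ j, (A i j) ^ 2) * (x ⬝ᵥ x)) :=
        Real.sqrt_le_sqrt (mulVec_dp_le A x)
    _ = _ := Real.sqrt_mul (by positivity) _

lemma mulVec_dot (A : Matrix (Fin N) (Fin N) ℝ) (x y : Fin N → ℝ) :
    x ⬝ᵥ (Aᵀ *ᵥ y) = (A *ᵥ x) ⬝ᵥ y := by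
  rw [Matrix.dotProduct_mulVec, Matrix.vecMul_transpose]

lemma dp_self_pos {x : Fin N → ℝ} (hx : x ≠ 0) : 0 < x ⬝ᵥ x := by
  rcases Function.ne_iff.1 hx with ⟨i, hi⟩
  have h1 : x i * x i ≤ x ⬝ᵥ x :=
    Finset.single_le_sum (fun j _ => mul_self_nonneg (x j)) (Finset.mem_univ i)
  have h2 : 0 < x i * x i := mul_self_pos.2 (by simpa using hi)
  linarith

lemma posdef_lower {A : Matrix (Fin N) (Fin N) ℝ} (hA : A.PosDef) :
    ∃ α : ℝ, 0 < α ∧ ∀ x, α * (x ⬝ᵥ x) ≤ x ⬝ᵥ (A *ᵥ x) := by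
  rcases Nat.eq_zero_or_pos N with hN | hN
  · refine ⟨1, one_pos, fun x => ?_⟩
    subst hN
    simp [dotProduct]
  · set f : (Fin N → ℝ) → ℝ := fun x => x ⬝ᵥ (A *ᵥ x) with hf
    have hcont : Continuous f := by
      have hfe : f = fun x => ∑ i, x i * ∑ j, A i j * x j := rfl
      rw [hfe]
      exact continuous_finset_sum _ fun i _ => (continuous_apply i).mul
        (continuous_finset_sum _ fun j _ => continuous_const.mul (continuous_apply j))
    have hg : Continuous fun x : Fin N → ℝ => x ⬝ᵥ x :=
      continuous_finset_sum _ fun i _ => (continuous_apply i).mul (continuous_apply i)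
    set S : Set (Fin N → ℝ) := {x | x ⬝ᵥ x = 1} with hS
    have hclosed : IsClosed S := isClosed_eq hg continuous_const
    have hsub : S ⊆ Metric.closedBall 0 1 := by
      intro x hx
      simp only [Metric.mem_closedBall, dist_zero_right]
      rw [pi_norm_le_iff_of_nonneg zero_le_one]
      intro i
      rw [Real.norm_eq_abs, abs_le_one_iff_mul_self_le_one]
      have h1 : x i * x i ≤ x ⬝ᵥ x :=
        Finset.single_le_sum (fun j _ => mul_self_nonneg (x j)) (Finset.mem_univ i)
      calc x i * x i ≤ x ⬝ᵥ x := h1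
        _ = 1 := hx
    have hcompact : IsCompact S :=
      (isCompact_closedBall (0 : Fin N → ℝ) 1).of_isClosed_subset hclosed hsub
    have hSne : S.Nonempty := by
      refine ⟨Pi.single ⟨0, hN⟩ 1, ?_⟩
      simp only [hS, Set.mem_setOf_eq, dotProduct, Pi.single_apply]
      rw [Finset.sum_eq_single ⟨0, hN⟩] <;> simp
    obtain ⟨z, hzS, hz⟩ := hcompact.exists_isMinOn hSne hcont.continuousOn
    have hzne : z ≠ 0 := by
      intro h
      rw [hS] at hzS
      simp only [Set.mem_setOf_eq, h] at hzS
      simp at hzS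
    have hα : 0 < f z := by
      have := hA.dotProduct_mulVec_pos hzne
      simpa [hf] using this
    refine ⟨f z, hα, fun x => ?_⟩
    by_cases hx : x = 0
    · simp [hx]
    · set t : ℝ := Real.sqrt (x ⬝ᵥ x) with ht
      have hxx : 0 < x ⬝ᵥ x := dp_self_pos hx
      have ht0 : 0 < t := Real.sqrt_pos.2 hxx
      have ht2 : t ^ 2 = x ⬝ᵥ x := Real.sq_sqrt hxx.le
      have hyS : (t⁻¹ • x) ∈ S := by
        simp only [hS, Set.mem_setOf_eq, smul_dotProduct, dotProduct_smul, smul_eq_mul]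
        field_simp
        linarith [ht2]
      have hmin : f z ≤ f (t⁻¹ • x) := hz hyS
      have hfy : f (t⁻¹ • x) = t⁻¹ * t⁻¹ * f x := by
        simp [hf, smul_dotProduct, dotProduct_smul, Matrix.mulVec_smul, smul_eq_mul]
        ring
      rw [hfy] at hmin
      have : f z * (x ⬝ᵥ x) ≤ t⁻¹ * t⁻¹ * f x * (x ⬝ᵥ x) :=
        mul_le_mul_of_nonneg_right hmin hxx.le
      have htt : t⁻¹ * t⁻¹ * (x ⬝ᵥ x) = 1 := by
        rw [← ht2]; field_simp
      have h2 : t⁻¹ * t⁻¹ * f x * (x ⬝ᵥ x) = f x := by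
        calc t⁻¹ * t⁻¹ * f x * (x ⬝ᵥ x) = f x * (t⁻¹ * t⁻¹ * (x ⬝ᵥ x)) := by ring
          _ = f x := by rw [htt, mul_one]
      exact this.trans_eq h2

lemma quad_identity (H Q M : Matrix (Fin N) (Fin N) ℝ) (hHM : H * M = Q)
    (hsymm : ∀ x y, x ⬝ᵥ (H *ᵥ y) = y ⬝ᵥ (H *ᵥ x)) (u dv : Fin N → ℝ) :
    (u - M *ᵥ dv) ⬝ᵥ (H *ᵥ (u - M *ᵥ dv)) =
      u ⬝ᵥ (H *ᵥ u) - 2 * (u ⬝ᵥ (Q *ᵥ dv)) + dv ⬝ᵥ ((Mᵀ * H * M) *ᵥ dv) := by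
  have h5 : H *ᵥ (M *ᵥ dv) = Q *ᵥ dv := by rw [Matrix.mulVec_mulVec, hHM]
  have h6 : (M *ᵥ dv) ⬝ᵥ (H *ᵥ (M *ᵥ dv)) = dv ⬝ᵥ ((Mᵀ * H * M) *ᵥ dv) := by
    rw [← mulVec_dot M dv (H *ᵥ (M *ᵥ dv)), Matrix.mulVec_mulVec, Matrix.mulVec_mulVec,
      Matrix.mul_assoc]
  have hexp : (u - M *ᵥ dv) ⬝ᵥ (H *ᵥ (u - M *ᵥ dv)) =
      u ⬝ᵥ (H *ᵥ u) - 2 * (u ⬝ᵥ (H *ᵥ (M *ᵥ dv))) + (M *ᵥ dv) ⬝ᵥ (H *ᵥ (M *ᵥ dv)) := by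
    rw [Matrix.mulVec_sub, dotProduct_sub, sub_dotProduct, sub_dotProduct,
      hsymm (M *ᵥ dv) u]
    ring
  rw [hexp, h6, h5]

lemma dd_identity (Q B : Matrix (Fin N) (Fin N) ℝ) (dv : Fin N → ℝ) :
    dv ⬝ᵥ ((Qᵀ + Q - B) *ᵥ dv) = 2 * (dv ⬝ᵥ (Q *ᵥ dv)) - dv ⬝ᵥ (B *ᵥ dv) := by
  rw [Matrix.sub_mulVec, Matrix.add_mulVec, dotProduct_sub, dotProduct_add,
    mulVec_dot Q dv dv, dotProduct_comm]
  ring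

lemma tendsto_nat_mul_of_anti (a : ℕ → ℝ) (h0 : ∀ k, 0 ≤ a k)
    (hdec : ∀ k, a (k + 1) ≤ a k) (hsum : Summable a) :
    Tendsto (fun k : ℕ => (k : ℝ) * a k) atTop (nhds 0) := by
  have hanti : Antitone a := antitone_nat_of_succ_le hdec
  have htail : Tendsto (fun m => ∑' k, a (k + m)) atTop (nhds 0) :=
    tendsto_sum_nat_add a
  have hb : ∀ n : ℕ, (n : ℝ) * a n ≤ 2 * ∑' k, a (k + n / 2) := by
    intro n
    have hsum' : Summable fun k => a (k + n / 2) := (summable_nat_add_iff _).2 hsum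
    have h1 : ((n - n / 2 : ℕ) : ℝ) * a n ≤ ∑ i ∈ Finset.Ico (n / 2) n, a i := by
      have := Finset.sum_le_sum (f := fun _ : ℕ => a n) (g := a)
        (s := Finset.Ico (n / 2) n) (fun i hi => hanti (Finset.mem_Ico.1 hi).2.le)
      simpa [Finset.sum_const, Nat.card_Ico, nsmul_eq_mul] using this
    have h2 : ∑ i ∈ Finset.Ico (n / 2) n, a i ≤ ∑' k, a (k + n / 2) := by
      rw [Finset.sum_Ico_eq_sum_range]
      have h3 : ∑ i ∈ Finset.range (n - n / 2), a (n / 2 + i) =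
          ∑ i ∈ Finset.range (n - n / 2), a (i + n / 2) := by
        apply Finset.sum_congr rfl
        intro i _
        rw [add_comm]
      rw [h3]
      exact Summable.sum_le_tsum _ (fun i _ => h0 _) hsum'
    have h4 : (n : ℝ) ≤ 2 * ((n - n / 2 : ℕ) : ℝ) := by
      have : n ≤ 2 * (n - n / 2) := by omega
      exact_mod_cast this
    calc (n : ℝ) * a n ≤ 2 * ((n - n / 2 : ℕ) : ℝ) * a n :=
          mul_le_mul_of_nonneg_right h4 (h0 n)
      _ = 2 * (((n - n / 2 : ℕ) : ℝ) * a n) := by ring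
      _ ≤ 2 * ∑ i ∈ Finset.Ico (n / 2) n, a i := by linarith [h1]
      _ ≤ 2 * ∑' k, a (k + n / 2) := by linarith [h2]
  have hdiv : Tendsto (fun n : ℕ => n / 2) atTop atTop :=
    Filter.tendsto_atTop_atTop.2 fun b => ⟨2 * b, fun n hn => by omega⟩
  have hupper : Tendsto (fun n : ℕ => 2 * ∑' k, a (k + n / 2)) atTop (nhds 0) := by
    have := (htail.comp hdiv).const_mul (2 : ℝ)
    simpa using this
  exact squeeze_zero (fun n : ℕ => mul_nonneg (Nat.cast_nonneg n) (h0 n)) hb hupper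

lemma key_seq (b : ℕ → ℝ) (c τ : ℝ) (hc : 0 ≤ c) (hτ0 : 0 < τ) (hτ1 : τ < 1)
    (hb0 : ∀ k, 0 ≤ b k) (hsum : Summable b)
    (hstep : ∀ k, b (k + 1) ≤ b k + c * τ ^ k) :
    Tendsto (fun k : ℕ => (k : ℝ) * b k) atTop (nhds 0) := by
  set a : ℕ → ℝ := fun k => b k + c / (1 - τ) * τ ^ k with ha
  have h1τ : (0 : ℝ) < 1 - τ := by linarith
  have h0 : ∀ k, 0 ≤ a k := fun k => add_nonneg (hb0 k)
    (mul_nonneg (div_nonneg hc h1τ.le) (pow_nonneg hτ0.le k))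
  have hdec : ∀ k, a (k + 1) ≤ a k := by
    intro k
    have key : c * τ ^ k + c / (1 - τ) * τ ^ (k + 1) = c / (1 - τ) * τ ^ k := by
      field_simp
      ring
    have := hstep k
    simp only [ha]
    nlinarith [this, key]
  have hsuma : Summable a :=
    hsum.add (((summable_geometric_of_lt_one hτ0.le hτ1)).mul_left _)
  have h := tendsto_nat_mul_of_anti a h0 hdec hsuma
  apply squeeze_zero (fun k : ℕ => mul_nonneg (Nat.cast_nonneg k) (hb0 k))
    (g := fun k : ℕ => (k : ℝ) * a k) ?_ h
  intro k
  apply mul_le_mul_of_nonneg_left _ (Nat.cast_nonneg k)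
  simp only [ha]
  have : 0 ≤ c / (1 - τ) * τ ^ k :=
    mul_nonneg (div_nonneg hc h1τ.le) (pow_nonneg hτ0.le k)
  linarith

end Stmt12Aux

open Stmt12Aux Filter

set_option maxHeartbeats 1000000 in
/-- With geometrically decaying errors `‖V^k‖ ≤ C τ^k`, the first-order
optimality residual satisfies `k · dist(0, Φ(ξ̂^k))² → 0`, where
`dist(0, S) = inf {‖p‖ : p ∈ S}` in the Euclidean norm. -/
theorem stmt12 {N : ℕ} (Φ : (Fin N → ℝ) → Set (Fin N → ℝ))
    (hmono : ∀ u v p q, p ∈ Φ u → q ∈ Φ v → 0 ≤ (u - v) ⬝ᵥ (p - q))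
    (hzero : ∃ ξstar, (0 : Fin N → ℝ) ∈ Φ ξstar)
    (Q M : Matrix (Fin N) (Fin N) ℝ) (hM : IsUnit M.det)
    (hH : (Q * M⁻¹).PosDef)
    (hD : (Qᵀ + Q - Mᵀ * (Q * M⁻¹) * M).PosDef)
    (ξ ξhat V : ℕ → Fin N → ℝ)
    (hincl : ∀ k, Q.mulVec (ξ k - ξhat k) + V k ∈ Φ (ξhat k))
    (hiter : ∀ k, ξ (k + 1) = ξ k - M.mulVec (ξ k - ξhat k))
    (C τ : ℝ) (hC : 0 ≤ C) (hτ : τ ∈ Set.Ioo (0 : ℝ) 1)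
    (hV : ∀ k, Real.sqrt (V k ⬝ᵥ V k) ≤ C * τ ^ k) :
    Filter.Tendsto
      (fun k : ℕ => (k : ℝ) * (sInf (euclidNorm '' Φ (ξhat k))) ^ 2)
      Filter.atTop (nhds 0) := by
  obtain ⟨ξstar, hstar⟩ := hzero
  obtain ⟨hτ0, hτ1⟩ := hτ
  have h1τ : (0 : ℝ) < 1 - τ := by linarith
  obtain ⟨H, hHdef⟩ : ∃ H, H = Q * M⁻¹ := ⟨_, rfl⟩
  rw [← hHdef] at hH hD
  have hHM : H * M = Q := by
    rw [hHdef, Matrix.mul_assoc, Matrix.nonsing_inv_mul M hM, Matrix.mul_one]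
  have hHsymm : Hᵀ = H := by
    ext i j
    have h := congrFun (congrFun hH.1 i) j
    simpa [Matrix.conjTranspose_apply, Matrix.transpose_apply] using h
  have hsymm : ∀ x y, x ⬝ᵥ (H *ᵥ y) = y ⬝ᵥ (H *ᵥ x) := by
    intro x y
    nth_rewrite 1 [← hHsymm]
    rw [mulVec_dot, dotProduct_comm]
  obtain ⟨αH, hαH0, hHlow⟩ := posdef_lower hH
  obtain ⟨αD, hαD0, hDlow⟩ := posdef_lower hD
  obtain ⟨d, hd⟩ : ∃ d : ℕ → Fin N → ℝ, ∀ k, d k = ξ k - ξhat k := ⟨_, fun _ => rfl⟩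
  obtain ⟨u, hu⟩ : ∃ u : ℕ → Fin N → ℝ, ∀ k, u k = ξ k - ξstar := ⟨_, fun _ => rfl⟩
  obtain ⟨a, hak⟩ : ∃ a : ℕ → ℝ, ∀ k, a k = u k ⬝ᵥ (H *ᵥ u k) := ⟨_, fun _ => rfl⟩
  obtain ⟨ε, hεk⟩ : ∃ ε : ℕ → ℝ, ∀ k, ε k = C * τ ^ k := ⟨_, fun _ => rfl⟩
  have hincl' : ∀ k, Q *ᵥ d k + V k ∈ Φ (ξhat k) := by
    intro k
    rw [hd k]
    exact hincl k
  have hε0 : ∀ k, 0 ≤ ε k := by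
    intro k
    rw [hεk k]
    positivity
  have hεV : ∀ k, Real.sqrt (V k ⬝ᵥ V k) ≤ ε k := by
    intro k
    rw [hεk k]
    exact hV k
  have hεC : ∀ k, ε k ≤ C := by
    intro k
    rw [hεk k]
    have h1 : τ ^ k ≤ 1 := pow_le_one₀ hτ0.le hτ1.le
    nlinarith
  have ha0 : ∀ k, 0 ≤ a k := by
    intro k
    rw [hak k]
    exact le_trans (mul_nonneg hαH0.le (dp_self_nonneg (u k))) (hHlow (u k))
  have hiter' : ∀ k, u (k + 1) = u k - M *ᵥ d k := by
    intro k
    rw [hu (k + 1), hu k, hd k, hiter k, sub_right_comm]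
  have hud : ∀ k, ξhat k - ξstar = u k - d k := by
    intro k
    rw [hu k, hd k]
    abel
  -- inequality 1
  have e1 : ∀ k, a (k + 1) =
      a k - 2 * (u k ⬝ᵥ (Q *ᵥ d k)) + d k ⬝ᵥ ((Mᵀ * H * M) *ᵥ d k) := by
    intro k
    rw [hak (k + 1), hak k, hiter' k]
    exact quad_identity H Q M hHM hsymm (u k) (d k)
  have e2 : ∀ k, u k ⬝ᵥ (Q *ᵥ d k) =
      (ξhat k - ξstar) ⬝ᵥ (Q *ᵥ d k) + d k ⬝ᵥ (Q *ᵥ d k) := by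
    intro k
    have h : u k = (ξhat k - ξstar) + d k := by
      rw [hud k]
      abel
    rw [h, add_dotProduct]
  have e3 : ∀ k, d k ⬝ᵥ ((Qᵀ + Q - Mᵀ * H * M) *ᵥ d k) =
      2 * (d k ⬝ᵥ (Q *ᵥ d k)) - d k ⬝ᵥ ((Mᵀ * H * M) *ᵥ d k) :=
    fun k => dd_identity Q (Mᵀ * H * M) (d k)
  have mono1 : ∀ k, 0 ≤ (ξhat k - ξstar) ⬝ᵥ (Q *ᵥ d k) + (ξhat k - ξstar) ⬝ᵥ V k := by
    intro k
    have h := hmono (ξhat k) ξstar (Q *ᵥ d k + V k) 0 (hincl' k) hstar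
    simpa [dotProduct_add, sub_zero] using h
  have Ineq1 : ∀ k, a (k + 1) ≤ a k - d k ⬝ᵥ ((Qᵀ + Q - Mᵀ * H * M) *ᵥ d k)
      + 2 * ((ξhat k - ξstar) ⬝ᵥ V k) := by
    intro k
    have h1 := e1 k
    have h2 := e2 k
    have h3 := e3 k
    have h4 := mono1 k
    linarith
  -- norm bound for the error term
  have hhatV : ∀ k, (ξhat k - ξstar) ⬝ᵥ V k ≤
      (Real.sqrt (u k ⬝ᵥ u k) + Real.sqrt (d k ⬝ᵥ d k)) * ε k := by
    intro k
    have h1 : (ξhat k - ξstar) ⬝ᵥ V k ≤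
        Real.sqrt ((ξhat k - ξstar) ⬝ᵥ (ξhat k - ξstar)) * Real.sqrt (V k ⬝ᵥ V k) :=
      cs _ _
    have h2 : Real.sqrt ((ξhat k - ξstar) ⬝ᵥ (ξhat k - ξstar)) ≤
        Real.sqrt (u k ⬝ᵥ u k) + Real.sqrt (d k ⬝ᵥ d k) := by
      rw [hud k]
      exact en_sub_le _ _
    calc (ξhat k - ξstar) ⬝ᵥ V k
        ≤ Real.sqrt ((ξhat k - ξstar) ⬝ᵥ (ξhat k - ξstar)) * Real.sqrt (V k ⬝ᵥ V k) := h1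
      _ ≤ (Real.sqrt (u k ⬝ᵥ u k) + Real.sqrt (d k ⬝ᵥ d k)) * ε k :=
          mul_le_mul h2 (hεV k) (Real.sqrt_nonneg _) (by positivity)
  -- the combined recursive inequality
  have comb : ∀ k, a (k + 1) ≤ a k - αD * (d k ⬝ᵥ d k)
      + 2 * (Real.sqrt (u k ⬝ᵥ u k) + Real.sqrt (d k ⬝ᵥ d k)) * ε k := by
    intro k
    have h1 := Ineq1 k
    have h2 := hDlow (d k)
    have h3 := hhatV k
    linarith
  -- constants
  obtain ⟨s, hs⟩ : ∃ s : ℝ, s = 1 / Real.sqrt αH := ⟨_, rfl⟩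
  obtain ⟨t, hts⟩ : ∃ t : ℝ, t = 1 / Real.sqrt αD := ⟨_, rfl⟩
  have hsqαH : 0 < Real.sqrt αH := Real.sqrt_pos.2 hαH0
  have hsqαD : 0 < Real.sqrt αD := Real.sqrt_pos.2 hαD0
  have hs0 : 0 ≤ s := by rw [hs]; positivity
  have ht0 : 0 ≤ t := by rw [hts]; positivity
  obtain ⟨c0, hc0⟩ : ∃ c0 : ℝ, c0 = s + t := ⟨_, rfl⟩
  have hc00 : 0 ≤ c0 := by rw [hc0]; linarith
  -- eu ≤ s * sqrt (a k)
  have heu : ∀ k, Real.sqrt (u k ⬝ᵥ u k) ≤ s * Real.sqrt (a k) := by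
    intro k
    have hlow := hHlow (u k)
    have h1 : u k ⬝ᵥ u k ≤ a k / αH := by
      rw [le_div_iff₀ hαH0, hak k]
      linarith
    calc Real.sqrt (u k ⬝ᵥ u k) ≤ Real.sqrt (a k / αH) := Real.sqrt_le_sqrt h1
      _ = Real.sqrt (a k) / Real.sqrt αH := Real.sqrt_div (ha0 k) αH
      _ = s * Real.sqrt (a k) := by rw [hs]; ring
  -- step C : sqrt a decreases up to c0 * ε
  have stepC : ∀ k, Real.sqrt (a (k + 1)) ≤ Real.sqrt (a k) + c0 * ε k := by
    intro k
    have hcomb := comb k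
    have hheu := heu k
    have hεk0 := hε0 k
    set ed : ℝ := Real.sqrt (d k ⬝ᵥ d k) with hed
    set eu : ℝ := Real.sqrt (u k ⬝ᵥ u k) with heuv
    set na : ℝ := Real.sqrt (a k) with hna
    have hed0 : 0 ≤ ed := Real.sqrt_nonneg _
    have heu0 : 0 ≤ eu := Real.sqrt_nonneg _
    have hna0 : 0 ≤ na := Real.sqrt_nonneg _
    have hedsq : ed ^ 2 = d k ⬝ᵥ d k := en_sq (d k)
    have hnasq : na ^ 2 = a k := Real.sq_sqrt (ha0 k)
    have hDt : Real.sqrt αD * t = 1 := by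
      rw [hts]
      field_simp
    have hexpand : (Real.sqrt αD * ed - t * ε k) ^ 2 =
        αD * ed ^ 2 - 2 * (ed * ε k) + t ^ 2 * ε k ^ 2 := by
      have hsq : Real.sqrt αD ^ 2 = αD := Real.sq_sqrt hαD0.le
      calc (Real.sqrt αD * ed - t * ε k) ^ 2
          = Real.sqrt αD ^ 2 * ed ^ 2 - 2 * (Real.sqrt αD * t) * (ed * ε k)
            + t ^ 2 * ε k ^ 2 := by ring
        _ = _ := by rw [hsq, hDt]; ring
    have h3' : 2 * (ed * ε k) ≤ αD * ed ^ 2 + t ^ 2 * ε k ^ 2 := by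
      have h := sq_nonneg (Real.sqrt αD * ed - t * ε k)
      rw [hexpand] at h
      linarith
    have h2' : 2 * (eu * ε k) ≤ 2 * (s * na * ε k) := by
      have := mul_le_mul_of_nonneg_right hheu hεk0
      linarith
    have key : a (k + 1) ≤ (na + c0 * ε k) ^ 2 := by
      rw [← hedsq] at hcomb
      have hb1 : a (k + 1) ≤ a k + 2 * (s * na * ε k) + t ^ 2 * ε k ^ 2 := by
        linarith [hcomb, h3', h2']
      have hb2 : (na + c0 * ε k) ^ 2 =
          na ^ 2 + 2 * ((s + t) * na * ε k) + (s + t) ^ 2 * ε k ^ 2 := by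
        rw [hc0]; ring
      have p1 : 0 ≤ t * na * ε k := mul_nonneg (mul_nonneg ht0 hna0) hεk0
      have p2 : 0 ≤ s ^ 2 * ε k ^ 2 := mul_nonneg (sq_nonneg s) (sq_nonneg (ε k))
      have p3 : 0 ≤ s * t * ε k ^ 2 :=
        mul_nonneg (mul_nonneg hs0 ht0) (sq_nonneg (ε k))
      rw [hb2, hnasq]
      linarith [hb1, p1, p2, p3]
    calc Real.sqrt (a (k + 1)) ≤ Real.sqrt ((na + c0 * ε k) ^ 2) := Real.sqrt_le_sqrt key
      _ = na + c0 * ε k := Real.sqrt_sq (by positivity)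
  -- geometric partial sums
  have hgeo : ∀ n : ℕ, (∑ i ∈ Finset.range n, ε i) ≤ C / (1 - τ) := by
    intro n
    have hτne : τ ≠ 1 := by linarith
    have h1 : ∑ i ∈ Finset.range n, τ ^ i = (τ ^ n - 1) / (τ - 1) := geom_sum_eq hτne n
    have h2 : (τ ^ n - 1) / (τ - 1) ≤ 1 / (1 - τ) := by
      have heq : (τ ^ n - 1) / (τ - 1) = (1 - τ ^ n) / (1 - τ) := by
        rw [div_eq_div_iff (by linarith) (by linarith)]
        ring
      rw [heq, div_le_div_iff₀ h1τ h1τ]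
      have hp : 0 ≤ τ ^ n := pow_nonneg hτ0.le n
      nlinarith
    have h3 : ∑ i ∈ Finset.range n, ε i = C * ∑ i ∈ Finset.range n, τ ^ i := by
      rw [Finset.mul_sum]
      exact Finset.sum_congr rfl fun i _ => hεk i
    rw [h3, h1]
    calc C * ((τ ^ n - 1) / (τ - 1)) ≤ C * (1 / (1 - τ)) :=
          mul_le_mul_of_nonneg_left h2 hC
      _ = C / (1 - τ) := by ring
  -- step D : uniform bound on sqrt (a k)
  have hnaB' : ∀ k, Real.sqrt (a k) ≤ Real.sqrt (a 0) + c0 * ∑ i ∈ Finset.range k, ε i := by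
    intro k
    induction k with
    | zero => simp
    | succ n ih =>
      have h1 := stepC n
      rw [Finset.sum_range_succ, mul_add]
      linarith
  obtain ⟨S, hSdef⟩ : ∃ S : ℝ, S = Real.sqrt (a 0) + c0 * (C / (1 - τ)) := ⟨_, rfl⟩
  have hS0 : 0 ≤ S := by
    rw [hSdef]
    have := Real.sqrt_nonneg (a 0)
    have : 0 ≤ c0 * (C / (1 - τ)) := by positivity
    positivity
  have hnaB : ∀ k, Real.sqrt (a k) ≤ S := by
    intro k
    have h1 := hnaB' k
    have h2 := mul_le_mul_of_nonneg_left (hgeo k) hc00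
    rw [hSdef]
    linarith
  have haS : ∀ k, a k ≤ S ^ 2 := by
    intro k
    have h1 := hnaB k
    have h2 : a k = Real.sqrt (a k) ^ 2 := (Real.sq_sqrt (ha0 k)).symm
    nlinarith [Real.sqrt_nonneg (a k)]
  have heuB : ∀ k, Real.sqrt (u k ⬝ᵥ u k) ≤ s * S := by
    intro k
    calc Real.sqrt (u k ⬝ᵥ u k) ≤ s * Real.sqrt (a k) := heu k
      _ ≤ s * S := mul_le_mul_of_nonneg_left (hnaB k) hs0
  -- step E : uniform bound on sqrt (d k ⬝ᵥ d k)
  obtain ⟨P, hPdef⟩ : ∃ P : ℝ,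
      P = (2 * S ^ 2 + 4 * (s * S) * C) / αD + 4 * C ^ 2 / αD ^ 2 := ⟨_, rfl⟩
  have hedP : ∀ k, (Real.sqrt (d k ⬝ᵥ d k)) ^ 2 ≤ P := by
    intro k
    have h1 := comb k
    have h2 := ha0 (k + 1)
    have h3 := haS k
    have h4 := heuB k
    have h5 := hε0 k
    have h6 := hεC k
    set ed : ℝ := Real.sqrt (d k ⬝ᵥ d k) with hed
    set eu : ℝ := Real.sqrt (u k ⬝ᵥ u k) with heuv
    have hed0 : 0 ≤ ed := Real.sqrt_nonneg _
    have heu0 : 0 ≤ eu := Real.sqrt_nonneg _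
    have hedsq : ed ^ 2 = d k ⬝ᵥ d k := en_sq (d k)
    rw [← hedsq] at h1
    have h7 : αD * ed ^ 2 ≤ S ^ 2 + 2 * (s * S) * C + 2 * C * ed := by
      have hc1 : 2 * (eu + ed) * ε k ≤ 2 * (s * S) * C + 2 * C * ed := by
        have hb1 : eu * ε k ≤ (s * S) * C := mul_le_mul h4 h6 h5 (by positivity)
        have hb2 : ed * ε k ≤ ed * C := mul_le_mul_of_nonneg_left h6 hed0
        linarith [hb1, hb2]
      linarith [h1, h2, h3, hc1]
    have h8 : 4 * (αD * C) * ed ≤ αD ^ 2 * ed ^ 2 + 4 * C ^ 2 := by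
      linarith [sq_nonneg (αD * ed - 2 * C)]
    have h9 : αD ^ 2 * ed ^ 2 ≤ αD ^ 2 * P := by
      have hPexp : αD ^ 2 * P = αD * (2 * S ^ 2 + 4 * (s * S) * C) + 4 * C ^ 2 := by
        rw [hPdef]
        field_simp
      have h7' := mul_le_mul_of_nonneg_left h7 hαD0.le
      linarith [h7', h8, hPexp]
    have h10 : (0 : ℝ) < αD ^ 2 := by positivity
    exact (mul_le_mul_iff_right₀ h10).mp h9
  have hP0 : 0 ≤ P := le_trans (sq_nonneg _) (hedP 0)
  obtain ⟨Pd, hPddef⟩ : ∃ Pd : ℝ, Pd = Real.sqrt P := ⟨_, rfl⟩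
  have hPd0 : 0 ≤ Pd := by rw [hPddef]; positivity
  have hedB : ∀ k, Real.sqrt (d k ⬝ᵥ d k) ≤ Pd := by
    intro k
    have h1 := hedP k
    rw [hPddef]
    calc Real.sqrt (d k ⬝ᵥ d k) = Real.sqrt (Real.sqrt (d k ⬝ᵥ d k) ^ 2) :=
          (Real.sqrt_sq (Real.sqrt_nonneg _)).symm
      _ ≤ Real.sqrt P := Real.sqrt_le_sqrt h1
  -- step F : summability of d k ⬝ᵥ d k
  obtain ⟨c2, hc2def⟩ : ∃ c2 : ℝ, c2 = 2 * (s * S + Pd) := ⟨_, rfl⟩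
  have hc20 : 0 ≤ c2 := by
    rw [hc2def]
    have : 0 ≤ s * S := mul_nonneg hs0 hS0
    linarith
  have hFk : ∀ k, αD * (d k ⬝ᵥ d k) ≤ (a k - a (k + 1)) + c2 * ε k := by
    intro k
    have h1 := comb k
    have h2 : 2 * (Real.sqrt (u k ⬝ᵥ u k) + Real.sqrt (d k ⬝ᵥ d k)) * ε k ≤ c2 * ε k := by
      have h3 : Real.sqrt (u k ⬝ᵥ u k) + Real.sqrt (d k ⬝ᵥ d k) ≤ s * S + Pd :=
        add_le_add (heuB k) (hedB k)
      have h4 := mul_le_mul_of_nonneg_right h3 (hε0 k)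
      rw [hc2def]
      nlinarith
    linarith
  have hqpartial : ∀ n : ℕ, ∑ k ∈ Finset.range n, (d k ⬝ᵥ d k) ≤
      (a 0 + c2 * (C / (1 - τ))) / αD := by
    intro n
    have h1 : ∑ k ∈ Finset.range n, (αD * (d k ⬝ᵥ d k)) ≤
        ∑ k ∈ Finset.range n, ((a k - a (k + 1)) + c2 * ε k) :=
      Finset.sum_le_sum fun k _ => hFk k
    rw [Finset.sum_add_distrib, Finset.sum_range_sub' a n] at h1
    simp only [← Finset.mul_sum] at h1
    have h2 : c2 * ∑ i ∈ Finset.range n, ε i ≤ c2 * (C / (1 - τ)) :=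
      mul_le_mul_of_nonneg_left (hgeo n) hc20
    have h3 : αD * ∑ k ∈ Finset.range n, (d k ⬝ᵥ d k) ≤ a 0 + c2 * (C / (1 - τ)) := by
      have h4 := ha0 n
      linarith
    rw [le_div_iff₀ hαD0]
    linarith
  have hqsum : Summable (fun k => d k ⬝ᵥ d k) :=
    summable_of_sum_range_le (fun k => dp_self_nonneg (d k)) hqpartial
  -- step G : summability of b k
  obtain ⟨b, hbk⟩ : ∃ b : ℕ → ℝ, ∀ k, b k = (M *ᵥ d k) ⬝ᵥ (H *ᵥ (M *ᵥ d k)) :=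
    ⟨_, fun _ => rfl⟩
  have hb0 : ∀ k, 0 ≤ b k := by
    intro k
    rw [hbk k]
    exact le_trans (mul_nonneg hαH0.le (dp_self_nonneg _)) (hHlow (M *ᵥ d k))
  obtain ⟨KM, hKM⟩ : ∃ KM : ℝ, KM = ∑ i, ∑ j, (M i j) ^ 2 := ⟨_, rfl⟩
  obtain ⟨KH, hKH⟩ : ∃ KH : ℝ, KH = ∑ i, ∑ j, (H i j) ^ 2 := ⟨_, rfl⟩
  have hKM0 : 0 ≤ KM := by rw [hKM]; positivity
  have hKH0 : 0 ≤ KH := by rw [hKH]; positivity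
  have hbB : ∀ k, b k ≤ (Real.sqrt KH * KM) * (d k ⬝ᵥ d k) := by
    intro k
    have t1 : (M *ᵥ d k) ⬝ᵥ (M *ᵥ d k) ≤ KM * (d k ⬝ᵥ d k) := by
      rw [hKM]
      exact mulVec_dp_le M (d k)
    have t2 : b k ≤ Real.sqrt KH * ((M *ᵥ d k) ⬝ᵥ (M *ᵥ d k)) := by
      have c1 : b k ≤ Real.sqrt ((M *ᵥ d k) ⬝ᵥ (M *ᵥ d k)) *
          Real.sqrt ((H *ᵥ (M *ᵥ d k)) ⬝ᵥ (H *ᵥ (M *ᵥ d k))) := by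
        rw [hbk k]
        exact cs _ _
      have c2' : Real.sqrt ((H *ᵥ (M *ᵥ d k)) ⬝ᵥ (H *ᵥ (M *ᵥ d k))) ≤
          Real.sqrt KH * Real.sqrt ((M *ᵥ d k) ⬝ᵥ (M *ᵥ d k)) := by
        rw [hKH]
        exact en_mulVec_le H _
      have c3 : Real.sqrt ((M *ᵥ d k) ⬝ᵥ (M *ᵥ d k)) ^ 2 = (M *ᵥ d k) ⬝ᵥ (M *ᵥ d k) :=
        en_sq _
      calc b k ≤ Real.sqrt ((M *ᵥ d k) ⬝ᵥ (M *ᵥ d k)) *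
            Real.sqrt ((H *ᵥ (M *ᵥ d k)) ⬝ᵥ (H *ᵥ (M *ᵥ d k))) := c1
        _ ≤ Real.sqrt ((M *ᵥ d k) ⬝ᵥ (M *ᵥ d k)) *
            (Real.sqrt KH * Real.sqrt ((M *ᵥ d k) ⬝ᵥ (M *ᵥ d k))) :=
            mul_le_mul_of_nonneg_left c2' (Real.sqrt_nonneg _)
        _ = Real.sqrt KH * Real.sqrt ((M *ᵥ d k) ⬝ᵥ (M *ᵥ d k)) ^ 2 := by ring
        _ = Real.sqrt KH * ((M *ᵥ d k) ⬝ᵥ (M *ᵥ d k)) := by rw [c3]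
    calc b k ≤ Real.sqrt KH * ((M *ᵥ d k) ⬝ᵥ (M *ᵥ d k)) := t2
      _ ≤ Real.sqrt KH * (KM * (d k ⬝ᵥ d k)) :=
          mul_le_mul_of_nonneg_left t1 (Real.sqrt_nonneg KH)
      _ = (Real.sqrt KH * KM) * (d k ⬝ᵥ d k) := by ring
  have hbsum : Summable b :=
    Summable.of_nonneg_of_le hb0 hbB (hqsum.mul_left _)
  -- step H : almost-monotonicity of b
  have hhatdiff : ∀ k, ξhat k - ξhat (k + 1) = M *ᵥ d k - (d k - d (k + 1)) := by
    intro k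
    rw [hd k, hd (k + 1), hiter k]
    abel
  obtain ⟨B1, hB1def⟩ : ∃ B1 : ℝ, B1 = Real.sqrt KM * Pd + 2 * Pd := ⟨_, rfl⟩
  have hB10 : 0 ≤ B1 := by
    rw [hB1def]
    have : 0 ≤ Real.sqrt KM * Pd := mul_nonneg (Real.sqrt_nonneg _) hPd0
    linarith
  have stepB : ∀ k, b (k + 1) ≤ b k + (4 * B1 * C) * τ ^ k := by
    intro k
    obtain ⟨e, hedef⟩ : ∃ e : Fin N → ℝ, e = d k - d (k + 1) := ⟨_, rfl⟩
    have hMd : M *ᵥ d (k + 1) = M *ᵥ d k - M *ᵥ e := by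
      rw [hedef, ← Matrix.mulVec_sub, sub_sub_cancel]
    have F1 : b (k + 1) = b k - 2 * ((M *ᵥ d k) ⬝ᵥ (Q *ᵥ e))
        + e ⬝ᵥ ((Mᵀ * H * M) *ᵥ e) := by
      rw [hbk (k + 1), hbk k, hMd]
      exact quad_identity H Q M hHM hsymm (M *ᵥ d k) e
    have mono2 : 0 ≤ (M *ᵥ d k - e) ⬝ᵥ (Q *ᵥ e + (V k - V (k + 1))) := by
      have h := hmono (ξhat k) (ξhat (k + 1)) (Q *ᵥ d k + V k) (Q *ᵥ d (k + 1) + V (k + 1))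
        (hincl' k) (hincl' (k + 1))
      have hw : (Q *ᵥ d k + V k) - (Q *ᵥ d (k + 1) + V (k + 1)) =
          Q *ᵥ e + (V k - V (k + 1)) := by
        rw [hedef, Matrix.mulVec_sub]
        abel
      rw [hhatdiff k, ← hedef, hw] at h
      exact h
    have hexp : (M *ᵥ d k - e) ⬝ᵥ (Q *ᵥ e + (V k - V (k + 1))) =
        (M *ᵥ d k) ⬝ᵥ (Q *ᵥ e) - e ⬝ᵥ (Q *ᵥ e)
          + (M *ᵥ d k - e) ⬝ᵥ (V k - V (k + 1)) := by
      rw [dotProduct_add, sub_dotProduct, sub_dotProduct]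
    rw [hexp] at mono2
    have F3 : e ⬝ᵥ ((Qᵀ + Q - Mᵀ * H * M) *ᵥ e) =
        2 * (e ⬝ᵥ (Q *ᵥ e)) - e ⬝ᵥ ((Mᵀ * H * M) *ᵥ e) :=
      dd_identity Q (Mᵀ * H * M) e
    have hDe : 0 ≤ e ⬝ᵥ ((Qᵀ + Q - Mᵀ * H * M) *ᵥ e) :=
      le_trans (mul_nonneg hαD0.le (dp_self_nonneg e)) (hDlow e)
    have herr : (M *ᵥ d k - e) ⬝ᵥ (V k - V (k + 1)) ≤ B1 * (2 * ε k) := by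
      have g1 : Real.sqrt ((M *ᵥ d k - e) ⬝ᵥ (M *ᵥ d k - e)) ≤ B1 := by
        have g2 : Real.sqrt ((M *ᵥ d k - e) ⬝ᵥ (M *ᵥ d k - e)) ≤
            Real.sqrt ((M *ᵥ d k) ⬝ᵥ (M *ᵥ d k)) + Real.sqrt (e ⬝ᵥ e) := en_sub_le _ _
        have g3 : Real.sqrt ((M *ᵥ d k) ⬝ᵥ (M *ᵥ d k)) ≤ Real.sqrt KM * Pd := by
          calc Real.sqrt ((M *ᵥ d k) ⬝ᵥ (M *ᵥ d k)) ≤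
              Real.sqrt KM * Real.sqrt (d k ⬝ᵥ d k) := by
                rw [hKM]
                exact en_mulVec_le M (d k)
            _ ≤ Real.sqrt KM * Pd :=
              mul_le_mul_of_nonneg_left (hedB k) (Real.sqrt_nonneg KM)
        have g4 : Real.sqrt (e ⬝ᵥ e) ≤ 2 * Pd := by
          rw [hedef]
          calc Real.sqrt ((d k - d (k + 1)) ⬝ᵥ (d k - d (k + 1))) ≤
              Real.sqrt (d k ⬝ᵥ d k) + Real.sqrt (d (k + 1) ⬝ᵥ d (k + 1)) := en_sub_le _ _
            _ ≤ 2 * Pd := by linarith [hedB k, hedB (k + 1)]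
        rw [hB1def]
        linarith
      have g5 : Real.sqrt ((V k - V (k + 1)) ⬝ᵥ (V k - V (k + 1))) ≤ 2 * ε k := by
        have g6 : Real.sqrt ((V k - V (k + 1)) ⬝ᵥ (V k - V (k + 1))) ≤
            Real.sqrt (V k ⬝ᵥ V k) + Real.sqrt (V (k + 1) ⬝ᵥ V (k + 1)) := en_sub_le _ _
        have g7 := hεV k
        have g8 := hεV (k + 1)
        have g9 : ε (k + 1) ≤ ε k := by
          rw [hεk k, hεk (k + 1)]
          have h1 : τ ^ (k + 1) ≤ τ ^ k := by
            calc τ ^ (k + 1) = τ ^ k * τ := by ring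
              _ ≤ τ ^ k * 1 := by nlinarith [pow_nonneg hτ0.le k]
              _ = τ ^ k := mul_one _
          exact mul_le_mul_of_nonneg_left h1 hC
        linarith
      calc (M *ᵥ d k - e) ⬝ᵥ (V k - V (k + 1)) ≤
          Real.sqrt ((M *ᵥ d k - e) ⬝ᵥ (M *ᵥ d k - e)) *
            Real.sqrt ((V k - V (k + 1)) ⬝ᵥ (V k - V (k + 1))) := cs _ _
        _ ≤ B1 * (2 * ε k) := mul_le_mul g1 g5 (Real.sqrt_nonneg _) hB10
    have hfin : (4 * B1 * C) * τ ^ k = 2 * (B1 * (2 * ε k)) := by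
      rw [hεk k]
      ring
    rw [hfin]
    linarith [mono2, F1, F3, hDe, herr]
  -- conclusion for b
  have hbtend : Filter.Tendsto (fun k : ℕ => (k : ℝ) * b k) Filter.atTop (nhds 0) :=
    key_seq b (4 * B1 * C) τ (by positivity) hτ0 hτ1 hb0 hbsum stepB
  -- transfer to d k ⬝ᵥ d k
  obtain ⟨KMi, hKMi⟩ : ∃ KMi : ℝ, KMi = ∑ i, ∑ j, (M⁻¹ i j) ^ 2 := ⟨_, rfl⟩
  have hKMi0 : 0 ≤ KMi := by rw [hKMi]; positivity
  have hdinv : ∀ k, d k = M⁻¹ *ᵥ (M *ᵥ d k) := by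
    intro k
    rw [Matrix.mulVec_mulVec, Matrix.nonsing_inv_mul M hM, Matrix.one_mulVec]
  have hqB : ∀ k, d k ⬝ᵥ d k ≤ (KMi / αH) * b k := by
    intro k
    have h1 : d k ⬝ᵥ d k ≤ KMi * ((M *ᵥ d k) ⬝ᵥ (M *ᵥ d k)) := by
      rw [hKMi]
      calc d k ⬝ᵥ d k = (M⁻¹ *ᵥ (M *ᵥ d k)) ⬝ᵥ (M⁻¹ *ᵥ (M *ᵥ d k)) := by rw [← hdinv k]
        _ ≤ (∑ i, ∑ j, (M⁻¹ i j) ^ 2) * ((M *ᵥ d k) ⬝ᵥ (M *ᵥ d k)) := mulVec_dp_le M⁻¹ _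
    have h2 : αH * ((M *ᵥ d k) ⬝ᵥ (M *ᵥ d k)) ≤ b k := by
      rw [hbk k]
      exact hHlow (M *ᵥ d k)
    have h3 : (M *ᵥ d k) ⬝ᵥ (M *ᵥ d k) ≤ b k / αH := by
      rw [le_div_iff₀ hαH0]
      linarith
    calc d k ⬝ᵥ d k ≤ KMi * ((M *ᵥ d k) ⬝ᵥ (M *ᵥ d k)) := h1
      _ ≤ KMi * (b k / αH) := mul_le_mul_of_nonneg_left h3 hKMi0
      _ = (KMi / αH) * b k := by ring
  have hqtend : Filter.Tendsto (fun k : ℕ => (k : ℝ) * (d k ⬝ᵥ d k))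
      Filter.atTop (nhds 0) := by
    apply squeeze_zero (fun k : ℕ => mul_nonneg (Nat.cast_nonneg k) (dp_self_nonneg (d k)))
      (g := fun k : ℕ => (KMi / αH) * ((k : ℝ) * b k))
    · intro k
      calc (k : ℝ) * (d k ⬝ᵥ d k) ≤ (k : ℝ) * ((KMi / αH) * b k) :=
            mul_le_mul_of_nonneg_left (hqB k) (Nat.cast_nonneg k)
        _ = (KMi / αH) * ((k : ℝ) * b k) := by ring
    · simpa using hbtend.const_mul (KMi / αH)
  -- geometric part
  have hτ2tend : Filter.Tendsto (fun k : ℕ => (k : ℝ) * (τ ^ 2) ^ k)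
      Filter.atTop (nhds 0) := by
    apply key_seq (fun k => (τ ^ 2) ^ k) 0 τ le_rfl hτ0 hτ1
    · intro k
      positivity
    · exact summable_geometric_of_lt_one (by positivity) (by nlinarith)
    · intro k
      have h1 : (τ ^ 2) ^ (k + 1) = (τ ^ 2) ^ k * τ ^ 2 := by ring
      have h2 : (τ ^ 2) ^ k * τ ^ 2 ≤ (τ ^ 2) ^ k * 1 :=
        mul_le_mul_of_nonneg_left (by nlinarith) (by positivity)
      simp only [zero_mul]
      rw [h1]
      linarith
  -- final bound
  obtain ⟨KQ, hKQ⟩ : ∃ KQ : ℝ, KQ = ∑ i, ∑ j, (Q i j) ^ 2 := ⟨_, rfl⟩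
  have hKQ0 : 0 ≤ KQ := by rw [hKQ]; positivity
  have hwb : ∀ k, (Q *ᵥ d k + V k) ⬝ᵥ (Q *ᵥ d k + V k) ≤
      2 * KQ * (d k ⬝ᵥ d k) + 2 * C ^ 2 * (τ ^ 2) ^ k := by
    intro k
    have h1 := add_sq_le (Q *ᵥ d k) (V k)
    have h2 : (Q *ᵥ d k) ⬝ᵥ (Q *ᵥ d k) ≤ KQ * (d k ⬝ᵥ d k) := by
      rw [hKQ]
      exact mulVec_dp_le Q (d k)
    have h3 : V k ⬝ᵥ V k ≤ C ^ 2 * (τ ^ 2) ^ k := by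
      have h5 : Real.sqrt (V k ⬝ᵥ V k) ^ 2 ≤ (C * τ ^ k) ^ 2 :=
        pow_le_pow_left₀ (Real.sqrt_nonneg _) (hV k) 2
      calc V k ⬝ᵥ V k = Real.sqrt (V k ⬝ᵥ V k) ^ 2 := (en_sq (V k)).symm
        _ ≤ (C * τ ^ k) ^ 2 := h5
        _ = C ^ 2 * (τ ^ 2) ^ k := by ring
    linarith
  have hsInfb : ∀ k, 0 ≤ sInf (euclidNorm '' Φ (ξhat k)) ∧
      sInf (euclidNorm '' Φ (ξhat k)) ^ 2 ≤ (Q *ᵥ d k + V k) ⬝ᵥ (Q *ᵥ d k + V k) := by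
    intro k
    have hne : (euclidNorm '' Φ (ξhat k)).Nonempty := ⟨_, ⟨_, hincl' k, rfl⟩⟩
    have hbdd : BddBelow (euclidNorm '' Φ (ξhat k)) := by
      refine ⟨0, fun y hy => ?_⟩
      obtain ⟨p, _, rfl⟩ := hy
      exact Real.sqrt_nonneg _
    have h0le : 0 ≤ sInf (euclidNorm '' Φ (ξhat k)) := by
      apply le_csInf hne
      rintro y ⟨p, _, rfl⟩
      exact Real.sqrt_nonneg _
    have hle : sInf (euclidNorm '' Φ (ξhat k)) ≤ euclidNorm (Q *ᵥ d k + V k) :=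
      csInf_le hbdd ⟨_, hincl' k, rfl⟩
    refine ⟨h0le, ?_⟩
    have h1 : sInf (euclidNorm '' Φ (ξhat k)) ^ 2 ≤ euclidNorm (Q *ᵥ d k + V k) ^ 2 :=
      pow_le_pow_left₀ h0le hle 2
    have h2 : euclidNorm (Q *ᵥ d k + V k) ^ 2 = (Q *ᵥ d k + V k) ⬝ᵥ (Q *ᵥ d k + V k) :=
      en_sq _
    linarith
  -- final squeeze
  apply squeeze_zero (fun k : ℕ => mul_nonneg (Nat.cast_nonneg k) (sq_nonneg _))
    (g := fun k : ℕ => 2 * KQ * ((k : ℝ) * (d k ⬝ᵥ d k))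
      + 2 * C ^ 2 * ((k : ℝ) * (τ ^ 2) ^ k))
  · intro k
    obtain ⟨h0le, hsq⟩ := hsInfb k
    have h1 : sInf (euclidNorm '' Φ (ξhat k)) ^ 2 ≤
        2 * KQ * (d k ⬝ᵥ d k) + 2 * C ^ 2 * (τ ^ 2) ^ k := le_trans hsq (hwb k)
    have h2 := mul_le_mul_of_nonneg_left h1 (Nat.cast_nonneg (α := ℝ) k)
    calc (k : ℝ) * sInf (euclidNorm '' Φ (ξhat k)) ^ 2
        ≤ (k : ℝ) * (2 * KQ * (d k ⬝ᵥ d k) + 2 * C ^ 2 * (τ ^ 2) ^ k) := h2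
      _ = 2 * KQ * ((k : ℝ) * (d k ⬝ᵥ d k)) + 2 * C ^ 2 * ((k : ℝ) * (τ ^ 2) ^ k) := by
          ring
  · have := (hqtend.const_mul (2 * KQ)).add (hτ2tend.const_mul (2 * C ^ 2))
    simpa using this
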